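/- Let G = (V, E) be a finite connected simple graph on n vertices whose maximum matching has size ν ≥ 1. For every set P of k pairwise disjoint unordered pairs of vertices of G (no vertex belongs to two pairs, so k ≤ n/2), there exist matchings M_1, …, M_m of G with m ≤ 2 · rt(G) · ⌈k/ν⌉ such that every pair in P is served by the sequence M_1, …, M_m and the composition (in order) of all the associated swap permutations is the identity permutation of V. (This is the combinatorial core of the lemma doh(G) = O(rt(G) · n/ν).) -/

import Mathlib

/-- A routing round on `G`: the swap permutation of a matching of `G`, i.e. an involution
of the vertices that moves vertices only along edges of `G`. -/
def isRound {V : Type*} (G : SimpleGraph V) (σ : Equiv.Perm V) : Prop :=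
  σ * σ = 1 ∧ ∀ v : V, σ v ≠ v → G.Adj v (σ v)

/-- Composition, in order, of a list of round permutations: for `L = [σ₁, …, σₘ]`,
`rComp L = σₘ ∘ ⋯ ∘ σ₁`. -/
def rComp {V : Type*} (L : List (Equiv.Perm V)) : Equiv.Perm V :=
  L.foldl (fun p σ => σ * p) 1

/-- `rt(G, π)`: the minimum number of routing rounds (matchings of `G`) whose swap
permutations, composed in order, realize the permutation `π`. -/
noncomputable def rtP {V : Type*} (G : SimpleGraph V) (π : Equiv.Perm V) : ℕ :=
  sInf {m | ∃ L : List (Equiv.Perm V), L.length = m ∧ (∀ σ ∈ L, isRound G σ) ∧ rComp L = π}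

/-- `rt(G)`: the routing number of `G`, the maximum of `rt(G, π)` over all permutations. -/
noncomputable def rt {V : Type*} [Fintype V] [DecidableEq V] (G : SimpleGraph V) : ℕ :=
  Finset.univ.sup (rtP G)

/-- The position permutation after `t` rounds of the sequence `L`: `π_t = σ_t ∘ ⋯ ∘ σ_1`. -/
def rPos {V : Type*} (L : List (Equiv.Perm V)) (t : ℕ) : Equiv.Perm V :=
  rComp (L.take t)

/-- `F` is a matching of `G`, viewed as a finite set of edges of `G` that are pairwise
vertex-disjoint. -/
def isMatchingF {V : Type*} (G : SimpleGraph V) (F : Finset (Sym2 V)) : Prop :=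
  (∀ e ∈ F, e ∈ G.edgeSet) ∧ (F : Set (Sym2 V)).Pairwise fun e f => ∀ x ∈ e, x ∉ f

lemma rComp_foldl {V : Type*} (L : List (Equiv.Perm V)) (x : Equiv.Perm V) :
    L.foldl (fun p σ => σ * p) x = rComp L * x := by
  induction L generalizing x with
  | nil => simp [rComp]
  | cons σ L ih =>
    simp only [List.foldl_cons, rComp, ih (σ * x), ih (σ * 1)]
    group

lemma rComp_append {V : Type*} (A B : List (Equiv.Perm V)) :
    rComp (A ++ B) = rComp B * rComp A := by
  rw [rComp, List.foldl_append, ← rComp, rComp_foldl]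

lemma rComp_singleton {V : Type*} (σ : Equiv.Perm V) : rComp [σ] = σ := by
  simp [rComp]

lemma isRound_swap {V : Type*} [DecidableEq V] (G : SimpleGraph V) {x y : V}
    (h : G.Adj x y) : isRound G (Equiv.swap x y) := by
  refine ⟨Equiv.swap_mul_self x y, fun v hv => ?_⟩
  rcases eq_or_ne v x with rfl | hvx
  · simpa [Equiv.swap_apply_left] using h
  rcases eq_or_ne v y with rfl | hvy
  · simpa [Equiv.swap_apply_right] using h.symm
  · exact absurd (Equiv.swap_apply_of_ne_of_ne hvx hvy) hv

lemma swap_realizable {V : Type*} [DecidableEq V] (G : SimpleGraph V) :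
    ∀ {x y : V}, G.Walk x y → x ≠ y →
    ∃ L : List (Equiv.Perm V), (∀ σ ∈ L, isRound G σ) ∧ rComp L = Equiv.swap x y := by
  intro x y p
  induction p with
  | nil => exact fun h => absurd rfl h
  | @cons x w y h p ih =>
    intro hxy
    by_cases hwy : w = y
    · subst hwy
      exact ⟨[Equiv.swap x w], by simpa using isRound_swap G h, rComp_singleton _⟩
    · obtain ⟨L, hL1, hL2⟩ := ih hwy
      refine ⟨[Equiv.swap x w] ++ L ++ [Equiv.swap x w], ?_, ?_⟩
      · intro σ hσ
        simp only [List.mem_append, List.mem_singleton] at hσ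
        rcases hσ with (rfl | hσ) | rfl
        · exact isRound_swap G h
        · exact hL1 σ hσ
        · exact isRound_swap G h
      · rw [rComp_append, rComp_append, rComp_singleton, hL2]
        have := Equiv.swap_mul_swap_mul_swap (x := y) (y := w) (z := x)
          (Ne.symm hwy) (Ne.symm hxy)
        rw [Equiv.swap_comm w x, Equiv.swap_comm y w] at this
        rw [← mul_assoc, this, Equiv.swap_comm]

lemma perm_realizable {V : Type*} [Fintype V] [DecidableEq V] (G : SimpleGraph V)
    (hG : G.Connected) (π : Equiv.Perm V) :
    ∃ L : List (Equiv.Perm V), (∀ σ ∈ L, isRound G σ) ∧ rComp L = π := by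
  refine Equiv.Perm.swap_induction_on π ⟨[], by simp, rfl⟩ fun f x y hxy ihf => ?_
  · obtain ⟨L, hL1, hL2⟩ := ihf
    obtain ⟨S, hS1, hS2⟩ := swap_realizable G ((hG.preconnected x y).some) hxy
    refine ⟨L ++ S, fun σ hσ => ?_, by rw [rComp_append, hS2, hL2]⟩
    rcases List.mem_append.mp hσ with h' | h'
    exacts [hL1 σ h', hS1 σ h']

lemma exists_le_rt {V : Type*} [Fintype V] [DecidableEq V] (G : SimpleGraph V)
    (hG : G.Connected) (π : Equiv.Perm V) :
    ∃ L : List (Equiv.Perm V), (∀ σ ∈ L, isRound G σ) ∧ L.length ≤ rt G ∧ rComp L = π := by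
  obtain ⟨L0, hL1, hL2⟩ := perm_realizable G hG π
  have hne : {m | ∃ L : List (Equiv.Perm V), L.length = m ∧ (∀ σ ∈ L, isRound G σ) ∧
      rComp L = π}.Nonempty := ⟨L0.length, L0, rfl, hL1, hL2⟩
  obtain ⟨L, hlen, h1, h2⟩ := Nat.sInf_mem hne
  exact ⟨L, h1, by rw [hlen]; exact Finset.le_sup (f := rtP G) (Finset.mem_univ π), h2⟩

lemma exists_perm_comp {α V : Type*} [Fintype V] [DecidableEq V] {f g : α → V}
    (hf : Function.Injective f) (hg : Function.Injective g) :
    ∃ π : Equiv.Perm V, ∀ x, π (f x) = g x := by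
  classical
  let ef := Equiv.ofInjective f hf
  let eg := Equiv.ofInjective g hg
  let σ : {x // x ∈ Set.range f} ≃ {x // x ∈ Set.range g} := ef.symm.trans eg
  refine ⟨σ.extendSubtype, fun x => ?_⟩
  rw [σ.extendSubtype_apply_of_mem (f x) (Set.mem_range_self x)]
  show ((eg (ef.symm ⟨f x, _⟩)) : V) = g x
  have : ef.symm ⟨f x, Set.mem_range_self x⟩ = x := by
    simp [ef, Equiv.ofInjective_symm_apply]
  rw [this]
  simp [eg, Equiv.ofInjective_apply]

lemma rPos_prefix {V : Type*} (B L' : List (Equiv.Perm V)) {t : ℕ} (ht : t ≤ B.length) :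
    rPos (B ++ L') t = rPos B t := by
  unfold rPos
  rw [List.take_append, Nat.sub_eq_zero_of_le ht, List.take_zero,
    List.append_nil]

lemma rPos_suffix {V : Type*} (B L' : List (Equiv.Perm V)) (hB : rComp B = 1) (t : ℕ) :
    rPos (B ++ L') (B.length + t) = rPos L' t := by
  unfold rPos
  rw [List.take_append, List.take_of_length_le (by omega),
    Nat.add_sub_cancel_left, rComp_append, hB, mul_one]

lemma block_lemma {V : Type*} [Fintype V] [DecidableEq V] (G : SimpleGraph V)
    (hG : G.Connected) {ν : ℕ} (a b : Fin ν → V)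
    (hab : Function.Injective (Sum.elim a b)) (hadj : ∀ j, G.Adj (a j) (b j))
    {m : ℕ} (hm : m ≤ ν) (u v : Fin m → V)
    (hinj : Function.Injective (Sum.elim u v)) :
    ∃ B : List (Equiv.Perm V), (∀ σ ∈ B, isRound G σ) ∧ B.length ≤ 2 * rt G ∧
      rComp B = 1 ∧
      ∀ i : Fin m, ∃ t ≤ B.length, G.Adj (rPos B t (u i)) (rPos B t (v i)) := by
  have hg : Function.Injective
      (Sum.elim (a ∘ Fin.castLE hm) (b ∘ Fin.castLE hm) : Fin m ⊕ Fin m → V) := by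
    have : (Sum.elim (a ∘ Fin.castLE hm) (b ∘ Fin.castLE hm) : Fin m ⊕ Fin m → V)
        = Sum.elim a b ∘ Sum.map (Fin.castLE hm) (Fin.castLE hm) := by
      funext x; cases x <;> rfl
    rw [this]
    exact hab.comp ((Fin.castLE_injective hm).sumMap (Fin.castLE_injective hm))
  obtain ⟨π, hπ⟩ := exists_perm_comp hinj hg
  obtain ⟨L1, h11, h12, h13⟩ := exists_le_rt G hG π
  obtain ⟨L2, h21, h22, h23⟩ := exists_le_rt G hG π⁻¹
  refine ⟨L1 ++ L2, fun σ hσ => ?_, ?_, ?_, fun i => ?_⟩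
  · rcases List.mem_append.mp hσ with h' | h'
    exacts [h11 σ h', h21 σ h']
  · rw [List.length_append, two_mul]; exact Nat.add_le_add h12 h22
  · rw [rComp_append, h13, h23, inv_mul_cancel]
  · refine ⟨L1.length, by simp, ?_⟩
    have hp : rPos (L1 ++ L2) L1.length = π := by
      unfold rPos; rw [List.take_left, h13]
    rw [hp]
    have h1 := hπ (Sum.inl i)
    have h2 := hπ (Sum.inr i)
    simp only [Sum.elim_inl, Sum.elim_inr, Function.comp_apply] at h1 h2
    rw [h1, h2]
    exact hadj _

lemma main_aux {V : Type*} [Fintype V] [DecidableEq V] (G : SimpleGraph V)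
    (hG : G.Connected) {ν : ℕ} (hν : 1 ≤ ν) (a b : Fin ν → V)
    (hab : Function.Injective (Sum.elim a b)) (hadj : ∀ j, G.Adj (a j) (b j)) :
    ∀ k : ℕ, ∀ u v : Fin k → V, Function.Injective (Sum.elim u v) →
    ∃ L : List (Equiv.Perm V),
      (∀ σ ∈ L, isRound G σ) ∧
      L.length ≤ 2 * rt G * ((k + ν - 1) / ν) ∧
      rComp L = 1 ∧
      ∀ i : Fin k, ∃ t ≤ L.length, G.Adj (rPos L t (u i)) (rPos L t (v i)) := by
  intro k
  induction k using Nat.strong_induction_on with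
  | _ k ih =>
  intro u v hinj
  rcases Nat.eq_zero_or_pos k with rfl | hk
  · exact ⟨[], by simp, by simp, rfl, fun i => i.elim0⟩
  by_cases hkν : k ≤ ν
  · obtain ⟨B, hB1, hB2, hB3, hB4⟩ := block_lemma G hG a b hab hadj hkν u v hinj
    refine ⟨B, hB1, ?_, hB3, hB4⟩
    calc B.length ≤ 2 * rt G * 1 := by omega
      _ ≤ 2 * rt G * ((k + ν - 1) / ν) := by
        have : 1 ≤ (k + ν - 1) / ν := by
          rw [Nat.le_div_iff_mul_le (by omega)]; omega
        exact Nat.mul_le_mul_left _ this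
  · push_neg at hkν
    -- first block: indices < ν; rest: k - ν pairs
    have hνk : ν ≤ k := le_of_lt hkν
    set u0 : Fin ν → V := u ∘ Fin.castLE hνk with hu0
    set v0 : Fin ν → V := v ∘ Fin.castLE hνk with hv0
    have hinj0 : Function.Injective (Sum.elim u0 v0) := by
      have : (Sum.elim u0 v0 : Fin ν ⊕ Fin ν → V)
          = Sum.elim u v ∘ Sum.map (Fin.castLE hνk) (Fin.castLE hνk) := by
        funext x; cases x <;> rfl
      rw [this]
      exact hinj.comp ((Fin.castLE_injective hνk).sumMap (Fin.castLE_injective hνk))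
    obtain ⟨B, hB1, hB2, hB3, hB4⟩ := block_lemma G hG a b hab hadj (le_refl ν) u0 v0 hinj0
    set sh : Fin (k - ν) → Fin k := fun i => ⟨ν + i.1, by omega⟩ with hsh
    have hshinj : Function.Injective sh := by
      intro i j hij
      simp only [hsh, Fin.mk.injEq] at hij
      exact Fin.ext (by omega)
    set u' : Fin (k - ν) → V := u ∘ sh with hu'
    set v' : Fin (k - ν) → V := v ∘ sh with hv'
    have hinj' : Function.Injective (Sum.elim u' v') := by
      have : (Sum.elim u' v' : Fin (k - ν) ⊕ Fin (k - ν) → V)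
          = Sum.elim u v ∘ Sum.map sh sh := by
        funext x; cases x <;> rfl
      rw [this]
      exact hinj.comp (hshinj.sumMap hshinj)
    obtain ⟨L', hL1, hL2, hL3, hL4⟩ := ih (k - ν) (by omega) u' v' hinj'
    refine ⟨B ++ L', fun σ hσ => ?_, ?_, ?_, fun i => ?_⟩
    · rcases List.mem_append.mp hσ with h' | h'
      exacts [hB1 σ h', hL1 σ h']
    · rw [List.length_append]
      have hdiv : (k + ν - 1) / ν = (k - ν + ν - 1) / ν + 1 := by
        have h1 : k + ν - 1 = (k - ν + ν - 1) + ν := by omega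
        rw [h1, Nat.add_div_right _ (by omega)]
      rw [hdiv, Nat.mul_add, Nat.mul_one]
      omega
    · rw [rComp_append, hB3, hL3, mul_one]
    · by_cases hi : i.1 < ν
      · obtain ⟨t, ht, hadj'⟩ := hB4 ⟨i.1, hi⟩
        refine ⟨t, by simp only [List.length_append]; omega, ?_⟩
        rw [rPos_prefix B L' ht]
        have hui : u0 ⟨i.1, hi⟩ = u i := by
          simp only [hu0, Function.comp_apply]; congr 1
        have hvi : v0 ⟨i.1, hi⟩ = v i := by
          simp only [hv0, Function.comp_apply]; congr 1
        rw [← hui, ← hvi]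
        exact hadj'
      · push_neg at hi
        obtain ⟨t, ht, hadj'⟩ := hL4 ⟨i.1 - ν, by omega⟩
        refine ⟨B.length + t, by simp only [List.length_append]; omega, ?_⟩
        rw [rPos_suffix B L' hB3 t]
        have hui : u' ⟨i.1 - ν, by omega⟩ = u i := by
          simp only [hu', Function.comp_apply]; congr 1
          exact Fin.ext (by simp [hsh]; omega)
        have hvi : v' ⟨i.1 - ν, by omega⟩ = v i := by
          simp only [hv', Function.comp_apply]; congr 1
          exact Fin.ext (by simp [hsh]; omega)
        rw [← hui, ← hvi]
        exact hadj'

/-- If the maximum matching of a finite connected graph `G` has size `ν ≥ 1`, then any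
collection of `k` pairwise disjoint pairs `{u i, v i}` of vertices (all `2k` vertices
distinct) can be served by a sequence of at most `2 * rt G * ⌈k / ν⌉` matchings of `G`
whose swap permutations compose (in order) to the identity. -/
theorem depth_overhead_upper_bound_by_matching
    {V : Type*} [Fintype V] [DecidableEq V] (G : SimpleGraph V) (hG : G.Connected)
    (ν : ℕ) (hν : 1 ≤ ν)
    (hex : ∃ F : Finset (Sym2 V), isMatchingF G F ∧ F.card = ν)
    (hmax : ∀ F : Finset (Sym2 V), isMatchingF G F → F.card ≤ ν)
    (k : ℕ) (u v : Fin k → V)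
    (hinj : Function.Injective (Sum.elim u v : Fin k ⊕ Fin k → V)) :
    ∃ L : List (Equiv.Perm V),
      (∀ σ ∈ L, isRound G σ) ∧
      L.length ≤ 2 * rt G * ((k + ν - 1) / ν) ∧
      rComp L = 1 ∧
      ∀ i : Fin k, ∃ t ≤ L.length, G.Adj (rPos L t (u i)) (rPos L t (v i)) := by
  obtain ⟨F, ⟨hFe, hFd⟩, hFc⟩ := hex
  let eqF : F ≃ Fin ν := F.equivFinOfCardEq hFc
  set E : Fin ν → Sym2 V := fun j => (eqF.symm j : Sym2 V) with hE
  have hEmem : ∀ j, E j ∈ F := fun j => (eqF.symm j).2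
  have hEinj : Function.Injective E := fun j j' h =>
    eqF.symm.injective (Subtype.ext h)
  set a : Fin ν → V := fun j => (E j).out.1 with ha
  set b : Fin ν → V := fun j => (E j).out.2 with hb
  have hmem_a : ∀ j, a j ∈ E j := fun j => Sym2.out_fst_mem _
  have hmem_b : ∀ j, b j ∈ E j := fun j => Sym2.out_snd_mem _
  have hEab : ∀ j, s(a j, b j) = E j := fun j => by
    show Sym2.mk (E j).out.1 (E j).out.2 = E j
    rw [Sym2.mk, Prod.mk.eta, Quot.out_eq]
  have hadj : ∀ j, G.Adj (a j) (b j) := fun j => by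
    have : s(a j, b j) ∈ G.edgeSet := by rw [hEab j]; exact hFe _ (hEmem j)
    exact (SimpleGraph.mem_edgeSet G).mp this
  have hdisj : ∀ {j j' : Fin ν}, j ≠ j' → ∀ x ∈ E j, x ∉ E j' :=
    fun {j j'} hne => hFd (hEmem j) (hEmem j') (fun h => hne (hEinj h))
  have hab : Function.Injective (Sum.elim a b) := by
    intro p q h
    cases p with
    | inl j =>
      cases q with
      | inl j' =>
        simp only [Sum.elim_inl] at h
        rcases eq_or_ne j j' with rfl | hne
        · rfl
        · exact (hdisj hne (a j) (hmem_a j) (by rw [h]; exact hmem_a j')).elim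
      | inr j' =>
        simp only [Sum.elim_inl, Sum.elim_inr] at h
        rcases eq_or_ne j j' with rfl | hne
        · exact absurd h (hadj j).ne
        · exact (hdisj hne (a j) (hmem_a j) (by rw [h]; exact hmem_b j')).elim
    | inr j =>
      cases q with
      | inl j' =>
        simp only [Sum.elim_inl, Sum.elim_inr] at h
        rcases eq_or_ne j j' with rfl | hne
        · exact absurd h.symm (hadj j).ne
        · exact (hdisj hne (b j) (hmem_b j) (by rw [h]; exact hmem_a j')).elim
      | inr j' =>
        simp only [Sum.elim_inr] at h
        rcases eq_or_ne j j' with rfl | hne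
        · rfl
        · exact (hdisj hne (b j) (hmem_b j) (by rw [h]; exact hmem_b j')).elim
  exact main_aux G hG hν a b hab hadj k u v hinj
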